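/- For every K, all β, a, b ∈ ℝ^K, all folding-angle vectors ρ, ρ₀ ∈ ℝ^K, and all x, y, z ∈ ℝ: T_K(β, a, b, −ρ) · T_K(β, a, b, −ρ₀)⁻¹ · (x, y, −z, 1)ᵀ = D₄ · T_K(β, a, b, ρ) · T_K(β, a, b, ρ₀)⁻¹ · (x, y, z, 1)ᵀ, where D₄ = diag(1, 1, −1, 1). (In particular T_K(β, a, b, ρ₀) is always invertible, being a product of invertible homogeneous matrices.) In origami terms: the rigidly folded state with all folding angles negated is the mirror image, through the plane of the fixed panel, of the original rigidly folded state. -/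

import Mathlib

open Matrix Real

/-- The homogeneous matrix `H(β, a, b)`: rotation `R_z(β)` with translation `(a, b, 0)`. -/
noncomputable def Hmat (β a b : ℝ) : Matrix (Fin 4) (Fin 4) ℝ :=
  !![Real.cos β, -Real.sin β, 0, a;
     Real.sin β,  Real.cos β, 0, b;
     0, 0, 1, 0;
     0, 0, 0, 1]

/-- The homogeneous matrix `X(ρ)`: rotation `R_x(ρ)` with zero translation. -/
noncomputable def Xmat (ρ : ℝ) : Matrix (Fin 4) (Fin 4) ℝ :=
  !![1, 0, 0, 0;
     0, Real.cos ρ, -Real.sin ρ, 0;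
     0, Real.sin ρ,  Real.cos ρ, 0;
     0, 0, 0, 1]

/-- The single-hole consistency matrix `T_K(β, a, b, ρ) = ∏_{k=1}^K H(β_k, a_k, b_k)·X(ρ_k)`,
the product taken in order of increasing `k`. -/
noncomputable def Th (K : ℕ) (β a b ρ : Fin K → ℝ) : Matrix (Fin 4) (Fin 4) ℝ :=
  (List.ofFn (fun k : Fin K => Hmat (β k) (a k) (b k) * Xmat (ρ k))).prod

/-- The matrix `D₄ = diag(1, 1, −1, 1)`. -/
noncomputable def D4 : Matrix (Fin 4) (Fin 4) ℝ :=
  !![1, 0, 0, 0; 0, 1, 0, 0; 0, 0, -1, 0; 0, 0, 0, 1]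

lemma D4_sq : D4 * D4 = 1 := by
  ext i j
  fin_cases i <;> fin_cases j <;>
    (simp [D4, Matrix.mul_apply, Fin.sum_univ_four, Matrix.one_apply];
     try simp [Matrix.vecHead, Matrix.vecTail])

lemma D4_cancel (X : Matrix (Fin 4) (Fin 4) ℝ) : D4 * (D4 * X) = X := by
  rw [← Matrix.mul_assoc, D4_sq, Matrix.one_mul]

lemma conj_HX (β a b ρ : ℝ) :
    D4 * (Hmat β a b * Xmat ρ) * D4 = Hmat β a b * Xmat (-ρ) := by
  ext i j
  fin_cases i <;> fin_cases j <;>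
    (simp [D4, Hmat, Xmat, Matrix.mul_apply, Fin.sum_univ_four];
     try simp [Matrix.vecHead, Matrix.vecTail])

lemma conj_prod (l : List (Matrix (Fin 4) (Fin 4) ℝ)) :
    (l.map (fun M => D4 * M * D4)).prod = D4 * l.prod * D4 := by
  induction l with
  | nil => simp [D4_sq]
  | cons h t ih =>
    rw [List.map_cons, List.prod_cons, List.prod_cons, ih]
    simp only [Matrix.mul_assoc, D4_cancel]

lemma Th_neg (K : ℕ) (β a b ρ : Fin K → ℝ) :
    Th K β a b (fun k => -(ρ k)) = D4 * Th K β a b ρ * D4 := by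
  rw [Th, Th, ← conj_prod, List.map_ofFn]
  rw [show (fun k : Fin K => Hmat (β k) (a k) (b k) * Xmat (-(ρ k))) =
    ((fun M => D4 * M * D4) ∘ fun k => Hmat (β k) (a k) (b k) * Xmat (ρ k)) from
    funext fun k => (conj_HX (β k) (a k) (b k) (ρ k)).symm]

lemma det_HX (β a b ρ : ℝ) : (Hmat β a b * Xmat ρ).det = 1 := by
  rw [Matrix.det_mul]
  simp [Hmat, Xmat, Matrix.det_succ_row_zero, Fin.sum_univ_succ]
  try simp [Matrix.vecHead, Matrix.vecTail, Fin.succAbove, Fin.lt_def]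
  nlinarith [Real.sin_sq_add_cos_sq β, Real.sin_sq_add_cos_sq ρ]

lemma Th_isUnit (K : ℕ) (β a b ρ : Fin K → ℝ) : IsUnit (Th K β a b ρ) := by
  rw [Th]
  apply List.prod_isUnit
  intro M hM
  obtain ⟨k, rfl⟩ := List.mem_ofFn.mp hM
  rw [Matrix.isUnit_iff_isUnit_det, det_HX]
  exact isUnit_one

lemma D4_inv : D4⁻¹ = D4 := Matrix.inv_eq_right_inv D4_sq

/-- the rigidly folded state with all folding angles negated is the mirror image,
through the plane of the fixed panel, of the original rigidly folded state:
`T_K(β,a,b,−ρ)·T_K(β,a,b,−ρ₀)⁻¹·(x,y,−z,1)ᵀ = D₄·T_K(β,a,b,ρ)·T_K(β,a,b,ρ₀)⁻¹·(x,y,z,1)ᵀ`. -/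
theorem mirror_image_of_negated_folding_angles (K : ℕ) (β a b ρ ρ₀ : Fin K → ℝ)
    (x y z : ℝ) :
    IsUnit (Th K β a b ρ₀) ∧
    (Th K β a b (fun k => -(ρ k)) * (Th K β a b (fun k => -(ρ₀ k)))⁻¹).mulVec ![x, y, -z, 1] =
      (D4 * Th K β a b ρ * (Th K β a b ρ₀)⁻¹).mulVec ![x, y, z, 1] := by
  refine ⟨Th_isUnit K β a b ρ₀, ?_⟩
  have hv : (![x, y, -z, 1] : Fin 4 → ℝ) = D4.mulVec ![x, y, z, 1] := by
    funext i
    fin_cases i <;> simp [D4, Matrix.mulVec, dotProduct, Fin.sum_univ_four]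
  have key : Th K β a b (fun k => -(ρ k)) * (Th K β a b (fun k => -(ρ₀ k)))⁻¹ =
      D4 * Th K β a b ρ * (Th K β a b ρ₀)⁻¹ * D4 := by
    rw [Th_neg, Th_neg, Matrix.mul_inv_rev, Matrix.mul_inv_rev, D4_inv]
    simp only [Matrix.mul_assoc, D4_cancel]
  rw [key, hv, Matrix.mulVec_mulVec]
  simp only [Matrix.mul_assoc, D4_sq, Matrix.mul_one]
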